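/- Let V be a finite set of unit vectors in ℂⁿ such that for all distinct v,w ∈ V, |⟨v,w⟩| ∈ {0, α} for a fixed real α with 0 < α < 1, and suppose 2 − (n+1)α² > 0. Then |V| ≤ n(n+1)(1−α²)/(2−(n+1)α²). -/

import Mathlib

open Finset ComplexConjugate

lemma sum_if_const {β : Type*} (s : Finset β) (c : Prop) [Decidable c] (f : β → ℂ) :
    (∑ x ∈ s, if c then f x else 0) = if c then ∑ x ∈ s, f x else 0 := by
  split <;> simp

lemma sum3 {m : ℕ} (a b c : Fin m → ℂ) :
    ∑ i, ∑ j, ∑ k, a i * (b j * c k)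
      = (∑ i, a i) * ((∑ i, b i) * (∑ i, c i)) := by
  simp_rw [← Finset.mul_sum, ← Finset.sum_mul]

section
variable {n : ℕ}

def dd (i k : Fin n) : ℂ := if i = k then 1 else 0

lemma cdd (i k : Fin n) : conj (if i = k then (1:ℂ) else 0) = if i = k then 1 else 0 := by
  split <;> simp

def tF (v : Fin n → ℂ) : Fin n × Fin n × Fin n × Fin n → ℂ :=
  fun x => v x.1 * v x.2.1 * conj (v x.2.2.1) * conj (v x.2.2.2)

lemma sum4 {m : ℕ} (a b c d : Fin m → ℂ) :
    ∑ i, ∑ j, ∑ k, ∑ l, a i * (b j * (c k * d l))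
      = (∑ i, a i) * ((∑ i, b i) * ((∑ i, c i) * (∑ i, d i))) := by
  simp_rw [← Finset.mul_sum, ← Finset.sum_mul]

lemma lemFF (v w : Fin n → ℂ) :
    ∑ x : Fin n × Fin n × Fin n × Fin n, conj (tF v x) * tF w x
      = ((∑ i, conj (v i) * w i) * (∑ i, v i * conj (w i))) ^ 2 := by
  rw [Fintype.sum_prod_type]
  simp_rw [Fintype.sum_prod_type]
  have h : ∀ i j k l : Fin n, conj (tF v (i,j,k,l)) * tF w (i,j,k,l)
      = (conj (v i) * w i) * ((conj (v j) * w j) * ((v k * conj (w k)) * (v l * conj (w l)))) := by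
    intro i j k l
    simp only [tF, map_mul, Complex.conj_conj]
    ring
  simp_rw [h, sum4]
  ring

def tG (v : Fin n → ℂ) : Fin n × Fin n × Fin n × Fin n → ℂ :=
  fun x => v x.1 * conj (v x.2.2.1) * dd x.2.1 x.2.2.2
         + v x.2.1 * conj (v x.2.2.1) * dd x.1 x.2.2.2
         + v x.1 * conj (v x.2.2.2) * dd x.2.1 x.2.2.1
         + v x.2.1 * conj (v x.2.2.2) * dd x.1 x.2.2.1

lemma lemFG (v w : Fin n → ℂ) (hv : ∑ i, conj (v i) * v i = 1) :
    ∑ x : Fin n × Fin n × Fin n × Fin n, conj (tF v x) * tG w x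
      = 4 * ((∑ i, conj (v i) * w i) * (∑ i, v i * conj (w i))) := by
  rw [Fintype.sum_prod_type]
  simp_rw [Fintype.sum_prod_type]
  simp only [tF, tG, dd, map_mul, Complex.conj_conj]
  simp only [mul_add, Finset.sum_add_distrib, mul_ite, ite_mul, mul_one, one_mul,
    mul_zero, zero_mul, sum_if_const, Finset.sum_ite_eq, Finset.sum_ite_eq',
    Finset.mem_univ, if_true]
  have eA : ∀ x x1 x2 : Fin n,
      conj (v x) * conj (v x1) * v x2 * v x1 * (w x * conj (w x2))
        = (conj (v x) * w x) * ((conj (v x1) * v x1) * (v x2 * conj (w x2))) := by intros; ring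
  have eB : ∀ x x1 x2 : Fin n,
      conj (v x) * conj (v x1) * v x2 * v x * (w x1 * conj (w x2))
        = (conj (v x) * v x) * ((conj (v x1) * w x1) * (v x2 * conj (w x2))) := by intros; ring
  have eC : ∀ x x1 x2 : Fin n,
      conj (v x) * conj (v x1) * v x1 * v x2 * (w x * conj (w x2))
        = (conj (v x) * w x) * ((conj (v x1) * v x1) * (v x2 * conj (w x2))) := by intros; ring
  have eD : ∀ x x1 x2 : Fin n,
      conj (v x) * conj (v x1) * v x * v x2 * (w x1 * conj (w x2))
        = (conj (v x) * v x) * ((conj (v x1) * w x1) * (v x2 * conj (w x2))) := by intros; ring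
  simp_rw [eA, eB, eC, eD, sum3, hv]
  ring

def tH : Fin n × Fin n × Fin n × Fin n → ℂ :=
  fun x => dd x.1 x.2.2.1 * dd x.2.1 x.2.2.2 + dd x.1 x.2.2.2 * dd x.2.1 x.2.2.1

lemma lemGF (v w : Fin n → ℂ) (hw : ∑ i, conj (w i) * w i = 1) :
    ∑ x : Fin n × Fin n × Fin n × Fin n, conj (tG v x) * tF w x
      = 4 * ((∑ i, conj (v i) * w i) * (∑ i, v i * conj (w i))) := by
  rw [Fintype.sum_prod_type]
  simp_rw [Fintype.sum_prod_type]
  simp only [tF, tG, dd, map_mul, map_add, Complex.conj_conj, cdd]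
  simp only [add_mul, Finset.sum_add_distrib, mul_ite, ite_mul, mul_one, one_mul,
    mul_zero, zero_mul, sum_if_const, Finset.sum_ite_eq, Finset.sum_ite_eq',
    Finset.mem_univ, if_true]
  have eA : ∀ x x1 x2 : Fin n,
      conj (v x) * v x2 * (w x * w x1 * conj (w x2) * conj (w x1))
        = (conj (v x) * w x) * ((w x1 * conj (w x1)) * (v x2 * conj (w x2))) := by intros; ring
  have eB : ∀ x x1 x2 : Fin n,
      conj (v x1) * v x2 * (w x * w x1 * conj (w x2) * conj (w x))
        = (w x * conj (w x)) * ((conj (v x1) * w x1) * (v x2 * conj (w x2))) := by intros; ring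
  have eC : ∀ x x1 x2 : Fin n,
      conj (v x) * v x2 * (w x * w x1 * conj (w x1) * conj (w x2))
        = (conj (v x) * w x) * ((w x1 * conj (w x1)) * (v x2 * conj (w x2))) := by intros; ring
  have eD : ∀ x x1 x2 : Fin n,
      conj (v x1) * v x2 * (w x * w x1 * conj (w x) * conj (w x2))
        = (w x * conj (w x)) * ((conj (v x1) * w x1) * (v x2 * conj (w x2))) := by intros; ring
  have hw' : ∑ i, w i * conj (w i) = 1 := by
    rw [← hw]; exact Finset.sum_congr rfl fun i _ => mul_comm _ _
  simp_rw [eA, eB, eC, eD, sum3, hw']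
  ring

lemma lemFH (v w : Fin n → ℂ) (hv : ∑ i, conj (v i) * v i = 1) :
    ∑ x : Fin n × Fin n × Fin n × Fin n, conj (tF v x) * tH x = 2 := by
  rw [Fintype.sum_prod_type]
  simp_rw [Fintype.sum_prod_type]
  simp only [tF, tH, dd, map_mul, Complex.conj_conj]
  simp only [mul_add, add_mul, Finset.sum_add_distrib, mul_ite, ite_mul, mul_one, one_mul,
    mul_zero, zero_mul, sum_if_const, Finset.sum_ite_eq, Finset.sum_ite_eq',
    Finset.mem_univ, if_true]
  have eA : ∀ x x1 : Fin n,
      conj (v x) * conj (v x1) * v x * v x1 = (conj (v x) * v x) * (conj (v x1) * v x1) := by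
    intros; ring
  have eB : ∀ x x1 : Fin n,
      conj (v x) * conj (v x1) * v x1 * v x = (conj (v x) * v x) * (conj (v x1) * v x1) := by
    intros; ring
  simp_rw [eA, eB, ← Finset.mul_sum, ← Finset.sum_mul, hv]
  ring

lemma lemHF (v w : Fin n → ℂ) (hw : ∑ i, conj (w i) * w i = 1) :
    ∑ x : Fin n × Fin n × Fin n × Fin n, conj (tH x) * tF w x = 2 := by
  rw [Fintype.sum_prod_type]
  simp_rw [Fintype.sum_prod_type]
  simp only [tF, tH, dd, map_mul, map_add, Complex.conj_conj, cdd]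
  simp only [mul_add, add_mul, Finset.sum_add_distrib, mul_ite, ite_mul, mul_one, one_mul,
    mul_zero, zero_mul, sum_if_const, Finset.sum_ite_eq, Finset.sum_ite_eq',
    Finset.mem_univ, if_true]
  have eA : ∀ x x1 : Fin n,
      w x * w x1 * conj (w x) * conj (w x1) = (conj (w x) * w x) * (conj (w x1) * w x1) := by
    intros; ring
  have eB : ∀ x x1 : Fin n,
      w x * w x1 * conj (w x1) * conj (w x) = (conj (w x) * w x) * (conj (w x1) * w x1) := by
    intros; ring
  simp_rw [eA, eB, ← Finset.mul_sum, ← Finset.sum_mul, hw]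
  ring

lemma lemHH :
    ∑ x : Fin n × Fin n × Fin n × Fin n, conj (tH x) * (tH x : ℂ) = 2 * n ^ 2 + 2 * n := by
  rw [Fintype.sum_prod_type]
  simp_rw [Fintype.sum_prod_type]
  simp only [tH, dd, map_mul, map_add, Complex.conj_conj, cdd]
  simp only [mul_add, add_mul, Finset.sum_add_distrib, mul_ite, ite_mul, mul_one, one_mul,
    mul_zero, zero_mul, sum_if_const, Finset.sum_ite_eq, Finset.sum_ite_eq',
    Finset.mem_univ, if_true]
  simp only [Finset.sum_const, Finset.card_univ, Fintype.card_fin, nsmul_eq_mul, mul_one]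
  push_cast
  ring

lemma lemGH (v w : Fin n → ℂ) (hv : ∑ i, conj (v i) * v i = 1) :
    ∑ x : Fin n × Fin n × Fin n × Fin n, conj (tG v x) * tH x = 4 * (n + 1) := by
  rw [Fintype.sum_prod_type]
  simp_rw [Fintype.sum_prod_type]
  simp only [tG, tH, dd, map_mul, map_add, Complex.conj_conj, cdd]
  simp only [mul_add, add_mul, Finset.sum_add_distrib, mul_ite, ite_mul, mul_one, one_mul,
    mul_zero, zero_mul, sum_if_const, Finset.sum_ite_eq, Finset.sum_ite_eq',
    Finset.mem_univ, if_true]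
  simp_rw [hv]
  simp_rw [Finset.sum_const, Finset.card_univ, Fintype.card_fin, nsmul_eq_mul, mul_one,
    ← Finset.mul_sum, hv, mul_one]
  push_cast
  ring

lemma lemHG (v w : Fin n → ℂ) (hw : ∑ i, conj (w i) * w i = 1) :
    ∑ x : Fin n × Fin n × Fin n × Fin n, conj (tH x) * tG w x = 4 * (n + 1) := by
  rw [Fintype.sum_prod_type]
  simp_rw [Fintype.sum_prod_type]
  simp only [tG, tH, dd, map_mul, map_add, Complex.conj_conj, cdd]
  simp only [mul_add, add_mul, Finset.sum_add_distrib, mul_ite, ite_mul, mul_one, one_mul,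
    mul_zero, zero_mul, sum_if_const, Finset.sum_ite_eq, Finset.sum_ite_eq',
    Finset.mem_univ, if_true]
  have hw' : ∀ x : Fin n, w x * conj (w x) = conj (w x) * w x := fun x => mul_comm _ _
  simp_rw [hw', hw]
  simp_rw [Finset.sum_const, Finset.card_univ, Fintype.card_fin, nsmul_eq_mul, mul_one,
    ← Finset.mul_sum, hw, mul_one]
  push_cast
  ring

lemma lemGG (v w : Fin n → ℂ) (hv : ∑ i, conj (v i) * v i = 1)
    (hw : ∑ i, conj (w i) * w i = 1) :
    ∑ x : Fin n × Fin n × Fin n × Fin n, conj (tG v x) * tG w x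
      = 4 * ((n + 2) * ((∑ i, conj (v i) * w i) * (∑ i, v i * conj (w i))) + 1) := by
  rw [Fintype.sum_prod_type]
  simp_rw [Fintype.sum_prod_type]
  simp only [tG, dd, map_mul, map_add, Complex.conj_conj, cdd]
  simp only [mul_add, add_mul, Finset.sum_add_distrib, mul_ite, ite_mul, mul_one, one_mul,
    mul_zero, zero_mul, sum_if_const, Finset.sum_ite_eq, Finset.sum_ite_eq',
    Finset.mem_univ, if_true]
  have g1 : ∀ x y : Fin n, conj (v x) * v y * (w x * conj (w y))
      = (conj (v x) * w x) * (v y * conj (w y)) := by intros; ring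
  have hw2 : ∑ i, w i * conj (w i) = 1 := by
    rw [← hw]; exact Finset.sum_congr rfl fun i _ => mul_comm _ _
  simp_rw [g1, ← Finset.mul_sum, ← Finset.sum_mul, hv, hw2, Finset.sum_const,
    Finset.card_univ, Fintype.card_fin, nsmul_eq_mul, mul_one, one_mul]
  have g2 : ∀ x : Fin n, (∑ i, conj (v i) * w i) * v x * conj (w x)
      = (∑ i, conj (v i) * w i) * (v x * conj (w x)) := by intros; ring
  simp_rw [← Finset.mul_sum, hw2]
  ring

noncomputable def tQ (v : Fin n → ℂ) : Fin n × Fin n → ℂ :=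
  fun x => v x.1 * conj (v x.2) - (n : ℂ)⁻¹ * dd x.1 x.2

lemma lemQQ (hn : (n : ℂ) ≠ 0) (v w : Fin n → ℂ) (hv : ∑ i, conj (v i) * v i = 1)
    (hw : ∑ i, conj (w i) * w i = 1) :
    ∑ x : Fin n × Fin n, conj (tQ v x) * tQ w x
      = (∑ i, conj (v i) * w i) * (∑ i, v i * conj (w i)) - (n : ℂ)⁻¹ := by
  rw [Fintype.sum_prod_type]
  simp only [tQ, dd, map_mul, map_sub, Complex.conj_conj, cdd, map_inv₀, map_natCast]
  simp only [mul_sub, sub_mul, Finset.sum_sub_distrib, mul_ite, ite_mul, mul_one, one_mul,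
    mul_zero, zero_mul, sum_if_const, Finset.sum_ite_eq, Finset.sum_ite_eq',
    Finset.mem_univ, if_true]
  have g1 : ∀ x y : Fin n, conj (v x) * v y * (w x * conj (w y))
      = (conj (v x) * w x) * (v y * conj (w y)) := by intros; ring
  have hw2 : ∑ i, w i * conj (w i) = 1 := by
    rw [← hw]; exact Finset.sum_congr rfl fun i _ => mul_comm _ _
  simp_rw [g1, ← Finset.mul_sum, ← Finset.sum_mul, hw2, hv, Finset.sum_const,
    Finset.card_univ, Fintype.card_fin, nsmul_eq_mul, mul_one, one_mul]
  field_simp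
  ring

noncomputable def tR (v : Fin n → ℂ) : Fin n × Fin n × Fin n × Fin n → ℂ :=
  fun x => tF v x - ((n : ℂ) + 2)⁻¹ * tG v x + (((n : ℂ) + 1) * ((n : ℂ) + 2))⁻¹ * tH x

set_option maxHeartbeats 2000000 in
lemma lemRR (v w : Fin n → ℂ) (hv : ∑ i, conj (v i) * v i = 1)
    (hw : ∑ i, conj (w i) * w i = 1) :
    ∑ x : Fin n × Fin n × Fin n × Fin n, conj (tR v x) * tR w x
      = ((∑ i, conj (v i) * w i) * (∑ i, v i * conj (w i))) ^ 2
        - 4 * ((n : ℂ) + 2)⁻¹ * ((∑ i, conj (v i) * w i) * (∑ i, v i * conj (w i)))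
        + 2 * (((n : ℂ) + 1) * ((n : ℂ) + 2))⁻¹ := by
  have ca : conj (((n : ℂ) + 2)⁻¹) = ((n : ℂ) + 2)⁻¹ := by
    simp [map_inv₀, map_add, map_natCast, Complex.conj_ofNat]
  have cb : conj ((((n : ℂ) + 1) * ((n : ℂ) + 2))⁻¹) = (((n : ℂ) + 1) * ((n : ℂ) + 2))⁻¹ := by
    simp [map_inv₀, map_mul, map_add, map_natCast, Complex.conj_ofNat]
  have expand : ∀ x : Fin n × Fin n × Fin n × Fin n,
      conj (tR v x) * tR w x
        = conj (tF v x) * tF w x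
          - ((n : ℂ) + 2)⁻¹ * (conj (tF v x) * tG w x)
          - ((n : ℂ) + 2)⁻¹ * (conj (tG v x) * tF w x)
          + (((n : ℂ) + 1) * ((n : ℂ) + 2))⁻¹ * (conj (tF v x) * tH x)
          + (((n : ℂ) + 1) * ((n : ℂ) + 2))⁻¹ * (conj (tH x) * tF w x)
          + (((n : ℂ) + 2)⁻¹ * ((n : ℂ) + 2)⁻¹) * (conj (tG v x) * tG w x)
          - (((n : ℂ) + 2)⁻¹ * (((n : ℂ) + 1) * ((n : ℂ) + 2))⁻¹) * (conj (tG v x) * tH x)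
          - (((n : ℂ) + 2)⁻¹ * (((n : ℂ) + 1) * ((n : ℂ) + 2))⁻¹) * (conj (tH x) * tG w x)
          + ((((n : ℂ) + 1) * ((n : ℂ) + 2))⁻¹ * (((n : ℂ) + 1) * ((n : ℂ) + 2))⁻¹)
              * (conj (tH x) * tH x) := by
    intro x
    simp only [tR, map_sub, map_add, map_mul, ca, cb]
    ring
  simp_rw [expand]
  simp only [Finset.sum_add_distrib, Finset.sum_sub_distrib]
  simp_rw [← Finset.mul_sum]
  rw [lemFF, lemFG v w hv, lemGF v w hw, lemFH v w hv, lemHF v w hw, lemGG v w hv hw,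
    lemGH v w hv, lemHG v w hw, lemHH]
  have h2 : ((n : ℂ) + 2) ≠ 0 := by
    intro h
    have := congrArg Complex.re h
    simp [Complex.add_re] at this
    nlinarith [Nat.cast_nonneg (α := ℝ) n, this]
  have h1 : ((n : ℂ) + 1) ≠ 0 := by
    intro h
    have := congrArg Complex.re h
    simp [Complex.add_re] at this
    nlinarith [Nat.cast_nonneg (α := ℝ) n, this]
  set P := ∑ i, conj (v i) * w i with hP
  set Q := ∑ i, v i * conj (w i) with hQ
  have hB : (((n:ℂ)+1)*((n:ℂ)+2))⁻¹ = ((n:ℂ)+1)⁻¹ * ((n:ℂ)+2)⁻¹ := mul_inv _ _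
  rw [hB]
  have hg : ((n:ℂ)+2) * ((n:ℂ)+2)⁻¹ = 1 := mul_inv_cancel₀ h2
  have hh : ((n:ℂ)+1) * ((n:ℂ)+1)⁻¹ = 1 := mul_inv_cancel₀ h1
  linear_combination (4*((n:ℂ)+2)⁻¹*(P*Q) - 2*((n:ℂ)+2)⁻¹*((n:ℂ)+1)⁻¹) * hg
    + (2*(n:ℂ)*((n:ℂ)+1)⁻¹*(((n:ℂ)+2)⁻¹)^2 - 4*(((n:ℂ)+2)⁻¹)^2) * hh
end

lemma gram_pos {i : Type*} [DecidableEq i] (V : Finset i) {I : Type*} [Fintype I]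
    (f : i → I → ℂ) :
    0 ≤ (∑ v ∈ V, ∑ w ∈ V, ∑ x : I, conj (f v x) * f w x).re := by
  have h : ∑ v ∈ V, ∑ w ∈ V, ∑ x : I, conj (f v x) * f w x
      = ∑ x : I, (∑ v ∈ V, conj (f v x)) * (∑ w ∈ V, f w x) := by
    calc ∑ v ∈ V, ∑ w ∈ V, ∑ x : I, conj (f v x) * f w x
        = ∑ v ∈ V, ∑ x : I, ∑ w ∈ V, conj (f v x) * f w x :=
          Finset.sum_congr rfl fun v _ => Finset.sum_comm
      _ = ∑ x : I, ∑ v ∈ V, ∑ w ∈ V, conj (f v x) * f w x := Finset.sum_comm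
      _ = ∑ x : I, (∑ v ∈ V, conj (f v x)) * (∑ w ∈ V, f w x) := by
          refine Finset.sum_congr rfl fun x _ => ?_
          rw [Finset.sum_mul]
          exact Finset.sum_congr rfl fun v _ => (Finset.mul_sum _ _ _).symm
  rw [h, Complex.re_sum]
  refine Finset.sum_nonneg fun x _ => ?_
  have h2 : (∑ v ∈ V, conj (f v x)) = conj (∑ w ∈ V, f w x) := (map_sum _ _ _).symm
  rw [h2, mul_comm, Complex.mul_conj]
  simp [Complex.normSq_nonneg]

open scoped InnerProductSpace

theorem stmt_4 {n : ℕ} (α : ℝ) (hα : 0 < α) (hα1 : α < 1)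
    (V : Finset (EuclideanSpace ℂ (Fin n)))
    (hunit : ∀ v ∈ V, ‖v‖ = 1)
    (hangle : ∀ v ∈ V, ∀ w ∈ V, v ≠ w →
      ‖(⟪v, w⟫_ℂ : ℂ)‖ = 0 ∨ ‖(⟪v, w⟫_ℂ : ℂ)‖ = α)
    (hden : 0 < 2 - (n + 1) * α ^ 2) :
    (V.card : ℝ) ≤ n * (n + 1) * (1 - α ^ 2) / (2 - (n + 1) * α ^ 2) := by
  classical
  rcases Nat.eq_zero_or_pos n with hn0 | hn1
  · subst hn0
    have hVe : V = ∅ := by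
      rw [Finset.eq_empty_iff_forall_notMem]
      intro v hv
      have h1 := hunit v hv
      have h0 : v = 0 := Subsingleton.elim v 0
      rw [h0, norm_zero] at h1
      norm_num at h1
    rw [hVe]
    simp
  · -- main case
    have hnR : (0:ℝ) < (n:ℝ) := by exact_mod_cast hn1
    have hnC : (n:ℂ) ≠ 0 := Nat.cast_ne_zero.mpr (Nat.pos_iff_ne_zero.mp hn1)
    have hip : ∀ v w : EuclideanSpace ℂ (Fin n),
        (⟪v, w⟫_ℂ : ℂ) = ∑ i, conj (v i) * w i := fun v w => by
      simp [PiLp.inner_apply, RCLike.inner_apply]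
      exact Finset.sum_congr rfl fun i _ => mul_comm _ _
    have hunit' : ∀ v ∈ V, ∑ i, conj (v i) * v i = 1 := by
      intro v hv
      have := inner_self_eq_norm_sq_to_K (𝕜 := ℂ) v
      rw [hunit v hv] at this
      rw [← hip v v, this]; norm_num
    set X : EuclideanSpace ℂ (Fin n) → EuclideanSpace ℂ (Fin n) → ℝ :=
      fun v w => ‖(⟪v, w⟫_ℂ : ℂ)‖ ^ 2 with hX
    have hpq : ∀ v w : EuclideanSpace ℂ (Fin n),
        (∑ i, conj (v i) * w i) * (∑ i, v i * conj (w i)) = ((X v w : ℝ) : ℂ) := by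
      intro v w
      have hq : (∑ i, v i * conj (w i)) = conj (∑ i, conj (v i) * w i) := by
        rw [map_sum]
        exact Finset.sum_congr rfl fun i _ => by rw [map_mul, Complex.conj_conj]
      rw [hq, Complex.mul_conj, ← hip]
      norm_cast
      rw [hX]
      simp [Complex.normSq_eq_norm_sq]
    -- fact 1 : R inner products
    have fact1 : ∀ v ∈ V, ∀ w ∈ V,
        (∑ x : Fin n × Fin n × Fin n × Fin n, conj (tR v x) * tR w x).re
          = (X v w) ^ 2 - 4 / ((n:ℝ) + 2) * (X v w) + 2 / (((n:ℝ) + 1) * ((n:ℝ) + 2)) := by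
      intro v hv w hw
      rw [lemRR v w (hunit' v hv) (hunit' w hw), hpq]
      have h : (((X v w : ℝ) : ℂ)) ^ 2 - 4 * ((n:ℂ) + 2)⁻¹ * ((X v w : ℝ) : ℂ)
            + 2 * (((n:ℂ) + 1) * ((n:ℂ) + 2))⁻¹
          = (((X v w) ^ 2 - 4 / ((n:ℝ) + 2) * (X v w)
              + 2 / (((n:ℝ) + 1) * ((n:ℝ) + 2)) : ℝ) : ℂ) := by
        push_cast
        ring
      rw [h, Complex.ofReal_re]
    have fact2 : ∀ v ∈ V, ∀ w ∈ V,
        (∑ x : Fin n × Fin n, conj (tQ v x) * tQ w x).re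
          = X v w - 1 / (n:ℝ) := by
      intro v hv w hw
      rw [lemQQ hnC v w (hunit' v hv) (hunit' w hw), hpq]
      have h : (((X v w : ℝ) : ℂ)) - ((n:ℂ))⁻¹ = ((X v w - 1 / (n:ℝ) : ℝ) : ℂ) := by
        push_cast
        ring
      rw [h, Complex.ofReal_re]
    -- positivity sums
    have hS2 : 0 ≤ ∑ v ∈ V, ∑ w ∈ V,
        ((X v w) ^ 2 - 4 / ((n:ℝ) + 2) * (X v w) + 2 / (((n:ℝ) + 1) * ((n:ℝ) + 2))) := by
      have h := gram_pos V (fun v => tR (fun i => v i))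
      rw [Complex.re_sum] at h
      simp_rw [Complex.re_sum] at h
      calc (0:ℝ) ≤ _ := h
        _ = _ := by
          refine Finset.sum_congr rfl fun v hv => Finset.sum_congr rfl fun w hw => ?_
          rw [← Complex.re_sum]
          exact fact1 v hv w hw
    have hS1 : 0 ≤ ∑ v ∈ V, ∑ w ∈ V, (X v w - 1 / (n:ℝ)) := by
      have h := gram_pos V (fun v => tQ (fun i => v i))
      rw [Complex.re_sum] at h
      simp_rw [Complex.re_sum] at h
      calc (0:ℝ) ≤ _ := h
        _ = _ := by
          refine Finset.sum_congr rfl fun v hv => Finset.sum_congr rfl fun w hw => ?_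
          rw [← Complex.re_sum]
          exact fact2 v hv w hw
    -- value of the F-sum
    have hS0 : ∑ v ∈ V, ∑ w ∈ V, ((X v w) ^ 2 - α ^ 2 * X v w)
        = (V.card : ℝ) * (1 - α ^ 2) := by
      have hrow : ∀ v ∈ V, ∑ w ∈ V, ((X v w) ^ 2 - α ^ 2 * X v w) = 1 - α ^ 2 := by
        intro v hv
        have hdiag : X v v = 1 := by
          rw [hX]
          simp only []
          rw [show (⟪v, v⟫_ℂ : ℂ) = ((1:ℝ):ℂ) by
            rw [inner_self_eq_norm_sq_to_K (𝕜 := ℂ) v, hunit v hv]; norm_num]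
          norm_num
        rw [← Finset.add_sum_erase _ _ hv, hdiag]
        have hoff : ∑ w ∈ V.erase v, ((X v w) ^ 2 - α ^ 2 * X v w) = 0 := by
          refine Finset.sum_eq_zero fun w hw => ?_
          have hwV := Finset.mem_of_mem_erase hw
          have hne : v ≠ w := fun h => (Finset.ne_of_mem_erase hw) h.symm
          rcases hangle v hv w hwV hne with h0 | hα'
          · rw [hX]
            simp only []
            rw [h0]
            ring
          · rw [hX]
            simp only []
            rw [hα']
            ring
        rw [hoff]
        ring
      rw [Finset.sum_congr rfl hrow, Finset.sum_const, nsmul_eq_mul]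
    -- pointwise identity
    have key : ∀ x : ℝ, x ^ 2 - α ^ 2 * x
        = (x ^ 2 - 4 / ((n:ℝ) + 2) * x + 2 / (((n:ℝ) + 1) * ((n:ℝ) + 2)))
          + (4 / ((n:ℝ) + 2) - α ^ 2) * (x - 1 / (n:ℝ))
          + ((2 - ((n:ℝ) + 1) * α ^ 2) / ((n:ℝ) * ((n:ℝ) + 1))) := by
      intro x
      have h1 : ((n:ℝ) + 1) ≠ 0 := by positivity
      have h2 : ((n:ℝ) + 2) ≠ 0 := by positivity
      have h0 : (n:ℝ) ≠ 0 := ne_of_gt hnR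
      field_simp
      ring
    have hcomb : (V.card : ℝ) * (1 - α ^ 2)
        = (∑ v ∈ V, ∑ w ∈ V,
            ((X v w) ^ 2 - 4 / ((n:ℝ) + 2) * (X v w) + 2 / (((n:ℝ) + 1) * ((n:ℝ) + 2))))
          + (4 / ((n:ℝ) + 2) - α ^ 2) * (∑ v ∈ V, ∑ w ∈ V, (X v w - 1 / (n:ℝ)))
          + ((2 - ((n:ℝ) + 1) * α ^ 2) / ((n:ℝ) * ((n:ℝ) + 1))) * (V.card : ℝ) ^ 2 := by
      rw [← hS0]
      simp_rw [key, Finset.sum_add_distrib, Finset.mul_sum, Finset.sum_const, nsmul_eq_mul]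
      ring
    have hf1 : 0 ≤ 4 / ((n:ℝ) + 2) - α ^ 2 := by
      have h2p : (0:ℝ) < (n:ℝ) + 2 := by positivity
      rw [sub_nonneg, le_div_iff₀ h2p]
      nlinarith [sq_nonneg α]
    have hN2 : ((2 - ((n:ℝ) + 1) * α ^ 2) / ((n:ℝ) * ((n:ℝ) + 1))) * (V.card : ℝ) ^ 2
        ≤ (V.card : ℝ) * (1 - α ^ 2) := by
      rw [hcomb]
      nlinarith [hS2, mul_nonneg hf1 hS1]
    have hnn1 : (0:ℝ) < (n:ℝ) * ((n:ℝ) + 1) := by positivity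
    have h3 : (2 - ((n:ℝ) + 1) * α ^ 2) * (V.card : ℝ) ^ 2
        ≤ (n:ℝ) * ((n:ℝ) + 1) * ((V.card : ℝ) * (1 - α ^ 2)) := by
      have h4 := mul_le_mul_of_nonneg_left hN2 (le_of_lt hnn1)
      calc (2 - ((n:ℝ) + 1) * α ^ 2) * (V.card : ℝ) ^ 2
          = (n:ℝ) * ((n:ℝ) + 1)
            * (((2 - ((n:ℝ) + 1) * α ^ 2) / ((n:ℝ) * ((n:ℝ) + 1))) * (V.card : ℝ) ^ 2) := by
            field_simp
        _ ≤ _ := h4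
    by_cases hN0 : (V.card : ℝ) = 0
    · rw [hN0]
      have hs1 : α ^ 2 < 1 := by nlinarith
      apply div_nonneg _ (le_of_lt hden)
      have hnn : (0:ℝ) ≤ (n:ℝ) * ((n:ℝ) + 1) := by positivity
      nlinarith [hnn, hs1]
    · have hNpos : 0 < (V.card : ℝ) :=
        lt_of_le_of_ne (Nat.cast_nonneg _) (Ne.symm hN0)
      rw [le_div_iff₀ hden]
      nlinarith [h3, hNpos, hden]
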